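/- Every Jacobi matrix x ∈ M(n) is strongly regular. -/

import Mathlib

open Matrix Polynomial

noncomputable section

attribute [local instance] Matrix.normedAddCommGroup Matrix.normedSpace

def d (k : ℕ) : ℕ := k * (k + 1) / 2

def cutoff {n : ℕ} (x : Matrix (Fin n) (Fin n) ℂ) {m : ℕ} (h : m ≤ n) :
    Matrix (Fin m) (Fin m) ℂ :=
  Matrix.of fun i j => x (Fin.castLE h i) (Fin.castLE h j)

def Phi (n : ℕ) (x : Matrix (Fin n) (Fin n) ℂ) : (Σ m : Fin n, Fin (m.1 + 1)) → ℂ :=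
  fun p => (-1 : ℂ) ^ (p.1.1 - p.2.1 + 1) * ((cutoff x p.1.2).charpoly.coeff p.2.1)

def StronglyRegular {n : ℕ} (x : Matrix (Fin n) (Fin n) ℂ) : Prop :=
  Function.Surjective (fderiv ℂ (Phi n) x)

def InEB {n : ℕ} (x : Matrix (Fin n) (Fin n) ℂ) : Prop :=
  (∀ i j : Fin n, i.1 = j.1 + 1 → x i j = -1) ∧
  (∀ i j : Fin n, j.1 + 1 < i.1 → x i j = 0)

def EigDisjoint {n : ℕ} (x : Matrix (Fin n) (Fin n) ℂ) : Prop :=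
  (∀ (m : ℕ) (_ : 1 ≤ m) (hm : m ≤ n), (cutoff x hm).charpoly.roots.toFinset.card = m) ∧
  (∀ (m : ℕ) (_ : 1 ≤ m) (hm : m + 1 ≤ n) (z : ℂ),
    ¬((cutoff x (Nat.le_of_succ_le hm)).charpoly.IsRoot z ∧
      (cutoff x hm).charpoly.IsRoot z))

def embed {n m : ℕ} (h : m ≤ n) (y : Matrix (Fin m) (Fin m) ℂ) :
    Matrix (Fin n) (Fin n) ℂ :=
  Matrix.of fun i j =>
    if hi : i.1 < m then if hj : j.1 < m then y ⟨i.1, hi⟩ ⟨j.1, hj⟩ else 0 else 0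

def GSet {n : ℕ} (x : Matrix (Fin n) (Fin n) ℂ) {m : ℕ} (h : m ≤ n) :
    Set (Matrix (Fin n) (Fin n) ℂ) :=
  {g | IsUnit g ∧
    (∀ i j : Fin n, m ≤ i.1 ∨ m ≤ j.1 → g i j = (1 : Matrix (Fin n) (Fin n) ℂ) i j) ∧
    cutoff g h ∈ Submodule.span ℂ (Set.range fun k : ℕ => (cutoff x h) ^ k)}

def centSubmodule {n : ℕ} (x : Matrix (Fin n) (Fin n) ℂ) :
    Submodule ℂ (Matrix (Fin n) (Fin n) ℂ) where
  carrier := {y | x * y = y * x}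
  add_mem' := fun {a b} ha hb => by
    simp only [Set.mem_setOf_eq] at *
    rw [mul_add, add_mul, ha, hb]
  zero_mem' := by simp
  smul_mem' := fun c a ha => by
    simp only [Set.mem_setOf_eq] at *
    rw [mul_smul_comm, smul_mul_assoc, ha]

def Zsub {n : ℕ} (x : Matrix (Fin n) (Fin n) ℂ) {m : ℕ} (h : m ≤ n) :
    Submodule ℂ (Matrix (Fin n) (Fin n) ℂ) :=
  Submodule.span ℂ (Set.range fun k : ℕ => embed h ((cutoff x h) ^ k))

def IsJacobi {n : ℕ} (x : Matrix (Fin n) (Fin n) ℂ) : Prop :=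
  (∀ i j : Fin n, (i.1 + 1 < j.1 ∨ j.1 + 1 < i.1) → x i j = 0) ∧
  (∀ i j : Fin n, (i.1 + 1 = j.1 ∨ j.1 + 1 = i.1) → x i j ≠ 0)

namespace SR9
open Finset

variable {n : ℕ}

lemma diff_entry {m : ℕ} (i j : Fin m) :
    Differentiable ℂ (fun x : Matrix (Fin m) (Fin m) ℂ => x i j) := by
  have : (fun x : Matrix (Fin m) (Fin m) ℂ => x i j) =
      ((ContinuousLinearMap.proj j : (Fin m → ℂ) →L[ℂ] ℂ).comp
        (ContinuousLinearMap.proj i : (Matrix (Fin m) (Fin m) ℂ) →L[ℂ] (Fin m → ℂ))) := rfl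
  rw [this]; exact ContinuousLinearMap.differentiable _

lemma diff_coeff_prod {ι' : Type*} (g : ι' → Matrix (Fin n) (Fin n) ℂ → Polynomial ℂ)
    (s : Finset ι') :
    (∀ i ∈ s, ∀ k, Differentiable ℂ fun x => (g i x).coeff k) → ∀ k : ℕ,
    Differentiable ℂ fun x => (∏ i ∈ s, g i x).coeff k := by
  classical
  induction s using Finset.induction_on with
  | empty =>
    intro _ k
    have : (fun x : Matrix (Fin n) (Fin n) ℂ => (∏ i ∈ (∅ : Finset ι'), g i x).coeff k)
        = fun _ => (1 : Polynomial ℂ).coeff k := by simp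
    rw [this]; exact differentiable_const _
  | @insert a s ha ih =>
    intro hg k
    have h1 : (fun x : Matrix (Fin n) (Fin n) ℂ => (∏ i ∈ insert a s, g i x).coeff k)
        = fun x => ∑ q ∈ Finset.HasAntidiagonal.antidiagonal k,
            (g a x).coeff q.1 * (∏ i ∈ s, g i x).coeff q.2 := by
      funext x; rw [Finset.prod_insert ha, Polynomial.coeff_mul]
    rw [h1]
    exact Differentiable.fun_sum fun q _ =>
      (hg a (Finset.mem_insert_self a s) q.1).mul
        (ih (fun i hi k' => hg i (Finset.mem_insert_of_mem hi) k') q.2)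

lemma diff_coeff_charmatrix {q : ℕ} (hq : q < n) (a b : Fin (q+1)) (k : ℕ) :
    Differentiable ℂ fun x : Matrix (Fin n) (Fin n) ℂ => (charmatrix (cutoff x hq) a b).coeff k := by
  by_cases hk : k = 0
  · subst hk
    have : (fun x : Matrix (Fin n) (Fin n) ℂ => (charmatrix (cutoff x hq) a b).coeff 0)
        = fun x => -(x (Fin.castLE hq a) (Fin.castLE hq b)) := by
      funext x
      rcases eq_or_ne a b with rfl | hab
      · simp [cutoff]
      · simp [charmatrix_apply_ne _ _ _ hab, cutoff]
    rw [this]; exact (diff_entry _ _).neg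
  · have : (fun x : Matrix (Fin n) (Fin n) ℂ => (charmatrix (cutoff x hq) a b).coeff k)
        = fun _ => if a = b ∧ k = 1 then 1 else 0 := by
      funext x
      rcases eq_or_ne a b with rfl | hab
      · simp [Polynomial.coeff_X, Polynomial.coeff_C, hk, eq_comm]
      · simp [charmatrix_apply_ne _ _ _ hab, Polynomial.coeff_C, hk, hab]
    rw [this]; exact differentiable_const _

lemma diff_component (p : Σ m : Fin n, Fin (m.1 + 1)) :
    Differentiable ℂ fun x : Matrix (Fin n) (Fin n) ℂ => Phi n x p := by
  have hrw : (fun x : Matrix (Fin n) (Fin n) ℂ => Phi n x p)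
      = fun x => (-1:ℂ)^(p.1.1 - p.2.1 + 1) * ∑ σ : Equiv.Perm (Fin (p.1.1+1)),
          ((Equiv.Perm.sign σ : ℤ) : ℂ) * (∏ i, charmatrix (cutoff x p.1.2) (σ i) i).coeff p.2.1 := by
    funext x
    rw [Phi]
    congr 1
    rw [Matrix.charpoly, Matrix.det_apply, Polynomial.finset_sum_coeff]
    refine Finset.sum_congr rfl fun σ _ => ?_
    simp [Polynomial.coeff_smul, Units.smul_def, zsmul_eq_mul]
  rw [hrw]
  refine Differentiable.const_mul (Differentiable.fun_sum fun σ _ => Differentiable.const_mul ?_ _) _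
  exact diff_coeff_prod _ Finset.univ (fun i _ k => diff_coeff_charmatrix p.1.2 (σ i) i k) _


def Emat (n : ℕ) (r : Σ m : Fin n, Fin (m.1 + 1)) : Matrix (Fin n) (Fin n) ℂ :=
  Matrix.single r.1 (Fin.castLE r.1.2 r.2) 1

def slope (x : Matrix (Fin n) (Fin n) ℂ) (p r : Σ m : Fin n, Fin (m.1 + 1)) : ℂ :=
  if h : r.1.1 < p.1.1 + 1 then
    (-1:ℂ) ^ (p.1.1 - p.2.1 + 1) *
      -((((charmatrix (cutoff x p.1.2)).updateRow ⟨r.1.1, h⟩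
        (Pi.single (Fin.castLE h r.2) 1)).det).coeff p.2.1)
  else 0

lemma cutoff_add {m : ℕ} (h : m ≤ n) (x y : Matrix (Fin n) (Fin n) ℂ) :
    cutoff (x + y) h = cutoff x h + cutoff y h := by
  ext i j; simp [cutoff]

lemma cutoff_smul {m : ℕ} (h : m ≤ n) (t : ℂ) (x : Matrix (Fin n) (Fin n) ℂ) :
    cutoff (t • x) h = t • cutoff x h := by
  ext i j; simp [cutoff]

lemma cutoff_Emat_lt (r : Σ m : Fin n, Fin (m.1 + 1)) {q : ℕ} (hq : q < n)
    (h : r.1.1 < q + 1) :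
    cutoff (Emat n r) hq = Matrix.single (⟨r.1.1, h⟩ : Fin (q+1)) (Fin.castLE h r.2) 1 := by
  ext i j
  simp [cutoff, Emat, Matrix.single, Fin.ext_iff]

lemma cutoff_Emat_ge (r : Σ m : Fin n, Fin (m.1 + 1)) {q : ℕ} (hq : q < n)
    (h : ¬ (r.1.1 < q + 1)) :
    cutoff (Emat n r) hq = 0 := by
  ext i j
  simp only [cutoff, Matrix.of_apply, Emat, Matrix.single, Matrix.zero_apply]
  rw [if_neg]
  rintro ⟨h1, -⟩
  have h2 : (r.1 : ℕ) = ((Fin.castLE hq i : Fin n) : ℕ) := congrArg Fin.val h1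
  have h3 : (i : ℕ) < q + 1 := i.isLt
  simp at h2
  omega

lemma charpoly_add_std {m : ℕ} (A : Matrix (Fin m) (Fin m) ℂ) (a b : Fin m) (t : ℂ) :
    (A + Matrix.single a b t).charpoly
      = A.charpoly - C t * ((charmatrix A).updateRow a (Pi.single b 1)).det := by
  have hrow : charmatrix (A + Matrix.single a b t)
      = (charmatrix A).updateRow a (fun c => charmatrix A a c - (Pi.single b (C t) : Fin m → ℂ[X]) c) := by
    ext i c
    by_cases hi : i = a
    · subst hi
      rw [Matrix.updateRow_self]
      simp only [charmatrix_apply, Matrix.add_apply, Matrix.single, Matrix.of_apply,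
        Pi.single_apply, map_add]
      by_cases hc : c = b
      · subst hc; simp; ring
      · simp [hc, Ne.symm hc]
    · rw [Matrix.updateRow_ne hi]
      simp only [charmatrix_apply, Matrix.add_apply, Matrix.single, Matrix.of_apply]
      have : ¬ (a = i ∧ b = c) := fun hh => hi hh.1.symm
      simp [this]
  rw [Matrix.charpoly, Matrix.charpoly, hrow]
  have hsingle : (fun c => charmatrix A a c - (Pi.single b (C t) : Fin m → ℂ[X]) c)
      = (fun c => charmatrix A a c) + (-(C t)) • (Pi.single b 1 : Fin m → ℂ[X]) := by
    funext c
    by_cases hc : c = b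
    · subst hc; simp; ring
    · simp [Pi.single_eq_of_ne hc]
  rw [hsingle, Matrix.det_updateRow_add, Matrix.det_updateRow_smul]
  have : Matrix.updateRow (charmatrix A) a (fun c => charmatrix A a c) = charmatrix A := by
    rw [show (fun c => charmatrix A a c) = charmatrix A a from rfl, Matrix.updateRow_eq_self]
  rw [this]
  ring

lemma key_line (x : Matrix (Fin n) (Fin n) ℂ) (p r : Σ m : Fin n, Fin (m.1 + 1)) (t : ℂ) :
    Phi n (x + t • Emat n r) p = Phi n x p + t * slope x p r := by
  by_cases h : r.1.1 < p.1.1 + 1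
  · have hc : cutoff (x + t • Emat n r) p.1.2
        = cutoff x p.1.2 + Matrix.single (⟨r.1.1, h⟩ : Fin (p.1.1+1)) (Fin.castLE h r.2) t := by
      rw [cutoff_add, cutoff_smul, cutoff_Emat_lt r p.1.2 h]
      congr 1
      ext i j
      simp only [Matrix.smul_apply, Matrix.single, Matrix.of_apply, smul_eq_mul]
      split_ifs <;> simp
    rw [Phi, Phi, hc, charpoly_add_std, Polynomial.coeff_sub, Polynomial.coeff_C_mul,
      slope, dif_pos h]
    ring
  · have hc : cutoff (x + t • Emat n r) p.1.2 = cutoff x p.1.2 := by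
      rw [cutoff_add, cutoff_smul, cutoff_Emat_ge r p.1.2 h]
      simp
    rw [slope, dif_neg h]
    simp [Phi, hc]


lemma fderiv_Emat (x : Matrix (Fin n) (Fin n) ℂ) (r : Σ m : Fin n, Fin (m.1 + 1)) :
    fderiv ℂ (Phi n) x (Emat n r) = fun p => slope x p r := by
  have hdiff : ∀ p, DifferentiableAt ℂ (fun x : Matrix (Fin n) (Fin n) ℂ => Phi n x p) x :=
    fun p => (diff_component p).differentiableAt
  have h1 : fderiv ℂ (Phi n) x
      = ContinuousLinearMap.pi (fun p => fderiv ℂ (fun x => Phi n x p) x) := fderiv_pi hdiff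
  rw [h1]
  funext p
  rw [ContinuousLinearMap.pi_apply]
  have h0 : x + (0:ℂ) • Emat n r = x := by simp
  have hγ : HasDerivAt (fun s : ℂ => x + s • Emat n r) (Emat n r) 0 := by
    exact (((hasDerivAt_id (0:ℂ)).smul_const (Emat n r)).const_add x).congr_deriv (by simp)
  have hf : HasFDerivAt (fun x => Phi n x p) (fderiv ℂ (fun x => Phi n x p) x)
      (x + (0:ℂ) • Emat n r) := by
    rw [h0]; exact (hdiff p).hasFDerivAt
  have hc : HasDerivAt (fun s : ℂ => Phi n (x + s • Emat n r) p)
      (fderiv ℂ (fun x => Phi n x p) x (Emat n r)) 0 := by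
      have := hf.comp_hasDerivAt (0:ℂ) hγ; exact this
  have hline : (fun s : ℂ => Phi n (x + s • Emat n r) p)
      = fun s => Phi n x p + s * slope x p r := funext fun s => key_line x p r s
  rw [hline] at hc
  have hc2 : HasDerivAt (fun s : ℂ => Phi n x p + s * slope x p r) (slope x p r) 0 := by
    exact (((hasDerivAt_id (0:ℂ)).mul_const (slope x p r)).const_add (Phi n x p)).congr_deriv (by simp)
  exact hc.unique hc2

def ent (x : Matrix (Fin n) (Fin n) ℂ) (a b : ℕ) : ℂ :=
  if h : a < n ∧ b < n then x ⟨a, h.1⟩ ⟨b, h.2⟩ else 0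

lemma charmatrix_cutoff_congr {m m' : ℕ} (hm : m ≤ n) (hm' : m' ≤ n)
    (x : Matrix (Fin n) (Fin n) ℂ) {a b : Fin m} {a' b' : Fin m'}
    (ha : (a:ℕ) = (a':ℕ)) (hb : (b:ℕ) = (b':ℕ)) :
    charmatrix (cutoff x hm) a b = charmatrix (cutoff x hm') a' b' := by
  have hab : (a = b) ↔ (a' = b') := by rw [Fin.ext_iff, Fin.ext_iff, ha, hb]
  have hent : cutoff x hm a b = cutoff x hm' a' b' := by
    simp only [cutoff, Matrix.of_apply]
    congr 1 <;> exact Fin.ext (by simp [ha, hb])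
  rcases eq_or_ne a b with rfl | hne
  · have h2 : a' = b' := hab.mp rfl
    subst h2
    rw [charmatrix_apply_eq, charmatrix_apply_eq, hent]
  · rw [charmatrix_apply_ne _ _ _ hne,
      charmatrix_apply_ne _ _ _ (fun hh => hne (hab.mpr hh)), hent]

lemma charm_entry_ne {m : ℕ} (hm : m ≤ n) (x : Matrix (Fin n) (Fin n) ℂ)
    (a b : Fin m) (a' b' : ℕ) (ha : (a:ℕ) = a') (hb : (b:ℕ) = b') (hab : a' ≠ b') :
    charmatrix (cutoff x hm) a b = -C (ent x a' b') := by
  subst ha; subst hb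
  rw [charmatrix_apply_ne _ _ _ (fun hh => hab (congrArg Fin.val hh))]
  rw [ent, dif_pos ⟨lt_of_lt_of_le a.isLt hm, lt_of_lt_of_le b.isLt hm⟩]
  rfl

def minorMat (x : Matrix (Fin n) (Fin n) ℂ) {M : ℕ} (hM : M ≤ n) (j t : ℕ) (ht : t < M) :
    Matrix (Fin t) (Fin t) (Polynomial ℂ) :=
  Matrix.of fun i c => charmatrix (cutoff x hM) ⟨i.1, lt_trans i.isLt ht⟩
    ⟨if c.1 < j then c.1 else c.1 + 1, by have := c.isLt; split_ifs <;> omega⟩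

lemma minor_det (x : Matrix (Fin n) (Fin n) ℂ)
    (hx0 : ∀ i j : Fin n, (i.1 + 1 < j.1 ∨ j.1 + 1 < i.1) → x i j = 0)
    {M : ℕ} (hM : M ≤ n) (j : ℕ) :
    ∀ t, ∀ hjt : j ≤ t, ∀ ht : t < M,
    (minorMat x hM j t ht).det
      = (∏ l ∈ Finset.Ico j t, (-C (ent x l (l+1)))) *
        (cutoff x (show j ≤ n by omega)).charpoly := by
  intro t hjt
  induction t, hjt using Nat.le_induction with
  | base =>
    intro ht
    have hm : minorMat x hM j j ht = charmatrix (cutoff x (show j ≤ n by omega)) := by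
      apply Matrix.ext; intro i c
      have hc : (c : ℕ) < j := c.isLt
      simp only [minorMat, Matrix.of_apply, if_pos hc]
      exact charmatrix_cutoff_congr hM _ x rfl rfl
    rw [hm]
    simp [Matrix.charpoly]
  | succ t hjt ih =>
    intro ht
    have ht' : t < M := by omega
    rw [Matrix.det_succ_column (minorMat x hM j (t+1) ht) (Fin.last t)]
    rw [Finset.sum_eq_single (Fin.last t)]
    · have hlast : (minorMat x hM j (t+1) ht) (Fin.last t) (Fin.last t)
          = -C (ent x t (t+1)) := by
        simp only [minorMat, Matrix.of_apply]
        refine charm_entry_ne hM x _ _ t (t+1) (by simp) ?_ (by omega)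
        simp only [Fin.val_last]
        split_ifs <;> omega
      have hsub : (minorMat x hM j (t+1) ht).submatrix (Fin.last t).succAbove
          (Fin.last t).succAbove = minorMat x hM j t ht' := by
        apply Matrix.ext; intro i c
        simp only [Matrix.submatrix_apply, Fin.succAbove_last, minorMat, Matrix.of_apply]
        exact charmatrix_cutoff_congr hM hM x (by simp) (by simp)
      rw [hlast, hsub, ih ht']
      rw [Finset.prod_Ico_succ_top hjt]
      have hpow : ((-1 : Polynomial ℂ)) ^ (((Fin.last t : Fin (t+1)) : ℕ)
          + ((Fin.last t : Fin (t+1)) : ℕ)) = 1 := by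
        rw [Fin.val_last]
        exact Even.neg_one_pow ⟨t, rfl⟩
      rw [hpow]
      ring
    · intro i _ hi
      have hiv : (i : ℕ) < t := by
        have h1 := i.isLt
        have h2 : (i : ℕ) ≠ t := fun hh => hi (Fin.ext (by simp [hh]))
        omega
      have hent : (minorMat x hM j (t+1) ht) i (Fin.last t) = 0 := by
        simp only [minorMat, Matrix.of_apply]
        rw [charm_entry_ne hM x _ _ (i:ℕ) (t+1) rfl
          (by simp only [Fin.val_last]; split_ifs <;> omega) (by omega)]
        rw [ent, dif_pos ⟨by omega, by omega⟩]
        rw [hx0 _ _ (Or.inl (by simp; omega))]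
        simp
      rw [hent]
      ring
    · intro h
      exact absurd (Finset.mem_univ _) h

lemma Ddet (x : Matrix (Fin n) (Fin n) ℂ)
    (hx0 : ∀ i j : Fin n, (i.1 + 1 < j.1 ∨ j.1 + 1 < i.1) → x i j = 0)
    {q : ℕ} (hq : q < n) (j : Fin (q+1)) :
    ((charmatrix (cutoff x hq)).updateRow (Fin.last q) (Pi.single j 1)).det
      = (-1:ℂ[X])^(q + (j:ℕ)) * ((∏ l ∈ Finset.Ico (j:ℕ) q, (-C (ent x l (l+1)))) *
        (cutoff x (show (j:ℕ) ≤ n by omega)).charpoly) := by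
  rw [Matrix.det_succ_row _ (Fin.last q)]
  rw [Finset.sum_eq_single j]
  · have h1 : ((charmatrix (cutoff x hq)).updateRow (Fin.last q) (Pi.single j 1))
        (Fin.last q) j = 1 := by
      rw [Matrix.updateRow_self, Pi.single_eq_same]
    have hsub : ((charmatrix (cutoff x hq)).updateRow (Fin.last q)
          (Pi.single j 1)).submatrix (Fin.last q).succAbove j.succAbove
        = minorMat x hq (j:ℕ) q (Nat.lt_succ_self q) := by
      apply Matrix.ext; intro i c
      simp only [Matrix.submatrix_apply, Fin.succAbove_last]
      rw [Matrix.updateRow_ne (Fin.castSucc_lt_last i).ne]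
      simp only [minorMat, Matrix.of_apply]
      refine charmatrix_cutoff_congr _ _ x (by simp) ?_
      rcases lt_or_ge ((c:ℕ)) ((j:ℕ)) with h | h
      · rw [Fin.succAbove_of_castSucc_lt _ _ (by simp [Fin.lt_def, h])]; simp [h]
      · have h' : ¬ (c:ℕ) < (j:ℕ) := by omega
        rw [Fin.succAbove_of_le_castSucc _ _ (by simp [Fin.le_def, h])]; simp [h']
    rw [h1, hsub, minor_det x hx0 hq (j:ℕ) q (by omega) (Nat.lt_succ_self q)]
    rw [Fin.val_last]
    ring
  · intro c _ hc
    have h0 : ((charmatrix (cutoff x hq)).updateRow (Fin.last q) (Pi.single j 1))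
        (Fin.last q) c = 0 := by
      rw [Matrix.updateRow_self, Pi.single_eq_of_ne hc]
    rw [h0]
    ring
  · intro h
    exact absurd (Finset.mem_univ _) h

lemma slope_diag (x : Matrix (Fin n) (Fin n) ℂ)
    (hx0 : ∀ i j : Fin n, (i.1 + 1 < j.1 ∨ j.1 + 1 < i.1) → x i j = 0)
    {a : ℕ} (ha : a < n) (k j : Fin (a+1)) :
    slope x ⟨⟨a,ha⟩,k⟩ ⟨⟨a,ha⟩,j⟩
      = (-1:ℂ)^(a - (k:ℕ) + 1) *
        -((((-1:ℂ[X])^(a + (j:ℕ)) * ((∏ l ∈ Finset.Ico (j:ℕ) a, (-C (ent x l (l+1)))) *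
          (cutoff x (show (j:ℕ) ≤ n by omega)).charpoly))).coeff (k:ℕ)) := by
  rw [slope, dif_pos (show a < a + 1 by omega)]
  exact congrArg (fun z => (-1:ℂ)^(a - (k:ℕ) + 1) * -(Polynomial.coeff z (k:ℕ)))
    (Ddet x hx0 ha j)

lemma neg_one_pow_C (e : ℕ) : ((-1 : ℂ[X]))^e = C ((-1:ℂ)^e) := by
  rw [map_pow, map_neg, _root_.map_one]

lemma prod_neg_C (j a : ℕ) (x : Matrix (Fin n) (Fin n) ℂ) :
    (∏ l ∈ Finset.Ico j a, (-C (ent x l (l+1))))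
      = C (∏ l ∈ Finset.Ico j a, (-(ent x l (l+1)))) := by
  rw [map_prod]
  exact Finset.prod_congr rfl fun l _ => (map_neg C _).symm

lemma slope_diag_upper (x : Matrix (Fin n) (Fin n) ℂ)
    (hx0 : ∀ i j : Fin n, (i.1 + 1 < j.1 ∨ j.1 + 1 < i.1) → x i j = 0)
    {a : ℕ} (ha : a < n) (k j : Fin (a+1)) (hjk : (j:ℕ) < (k:ℕ)) :
    slope x ⟨⟨a,ha⟩,k⟩ ⟨⟨a,ha⟩,j⟩ = 0 := by
  rw [slope_diag x hx0 ha k j, neg_one_pow_C, prod_neg_C]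
  rw [← mul_assoc, ← _root_.map_mul, Polynomial.coeff_C_mul]
  rw [Polynomial.coeff_eq_zero_of_natDegree_lt]
  · ring
  · rw [Matrix.charpoly_natDegree_eq_dim, Fintype.card_fin]
    exact hjk

lemma slope_diag_ne (x : Matrix (Fin n) (Fin n) ℂ)
    (hx0 : ∀ i j : Fin n, (i.1 + 1 < j.1 ∨ j.1 + 1 < i.1) → x i j = 0)
    (hx1 : ∀ i j : Fin n, (i.1 + 1 = j.1 ∨ j.1 + 1 = i.1) → x i j ≠ 0)
    {a : ℕ} (ha : a < n) (k : Fin (a+1)) :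
    slope x ⟨⟨a,ha⟩,k⟩ ⟨⟨a,ha⟩,k⟩ ≠ 0 := by
  rw [slope_diag x hx0 ha k k, neg_one_pow_C, prod_neg_C]
  rw [← mul_assoc, ← _root_.map_mul, Polynomial.coeff_C_mul]
  have hcoeff : ((cutoff x (show (k:ℕ) ≤ n by omega)).charpoly).coeff (k:ℕ) = 1 := by
    have hmono := Matrix.charpoly_monic (cutoff x (show (k:ℕ) ≤ n by omega))
    have hdeg : ((cutoff x (show (k:ℕ) ≤ n by omega)).charpoly).natDegree = (k:ℕ) := by
      rw [Matrix.charpoly_natDegree_eq_dim, Fintype.card_fin]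
    have h2 := hmono.coeff_natDegree
    rwa [hdeg] at h2
  rw [hcoeff, mul_one]
  apply mul_ne_zero
  · exact pow_ne_zero _ (by norm_num)
  · rw [neg_ne_zero]
    apply mul_ne_zero
    · exact pow_ne_zero _ (by norm_num)
    · rw [Finset.prod_ne_zero_iff]
      intro l hl
      rw [Finset.mem_Ico] at hl
      rw [neg_ne_zero, ent, dif_pos ⟨by omega, by omega⟩]
      exact hx1 _ _ (Or.inl rfl)


def blockEquiv {a : ℕ} (ha : a < n) :
    Fin (a+1) ≃ {p : Σ m : Fin n, Fin (m.1 + 1) // p.1.1 = a} where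
  toFun k := ⟨⟨⟨a, ha⟩, k⟩, rfl⟩
  invFun p := ⟨p.1.2.1, by have h1 := p.1.2.isLt; have h2 := p.2; omega⟩
  left_inv k := rfl
  right_inv p := by
    obtain ⟨⟨m, k⟩, hp⟩ := p
    simp only at hp
    subst hp
    rfl


end SR9

/-- Every Jacobi matrix is strongly regular. -/
theorem stmt9 (n : ℕ) (x : Matrix (Fin n) (Fin n) ℂ) (hx : IsJacobi x) :
    StronglyRegular x := by
  classical
  intro y
  set T : Matrix (Σ m : Fin n, Fin (m.1+1)) (Σ m : Fin n, Fin (m.1+1)) ℂ :=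
    Matrix.of fun p r => SR9.slope x p r with hT
  have hBT : (Tᵀ).BlockTriangular (fun p => p.1.1) := by
    intro p r h
    have h' : (r.1.1 : ℕ) < p.1.1 := h
    show SR9.slope x r p = 0
    rw [SR9.slope, dif_neg (by omega)]
    
  have hdet : T.det ≠ 0 := by
    rw [← Matrix.det_transpose T, hBT.det]
    apply Finset.prod_ne_zero_iff.mpr
    intro a hamem
    obtain ⟨p0, -, hp0⟩ := Finset.mem_image.mp hamem
    have ha : a < n := hp0 ▸ p0.1.isLt
    have h1 : Tᵀ.toSquareBlock (fun p => p.1.1) a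
        = ((T.toSquareBlock (fun p => p.1.1) a))ᵀ := rfl
    rw [h1, Matrix.det_transpose,
      ← Matrix.det_submatrix_equiv_self (SR9.blockEquiv ha) (T.toSquareBlock _ a)]
    have hUT : (((T.toSquareBlock (fun p => p.1.1) a)).submatrix
        (SR9.blockEquiv ha) (SR9.blockEquiv ha)).BlockTriangular id := by
      intro k j hkj
      show SR9.slope x ⟨⟨a,ha⟩,k⟩ ⟨⟨a,ha⟩,j⟩ = 0
      exact SR9.slope_diag_upper x hx.1 ha k j hkj
    rw [Matrix.det_of_upperTriangular hUT]
    apply Finset.prod_ne_zero_iff.mpr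
    intro k _
    exact SR9.slope_diag_ne x hx.1 hx.2 ha k
  have hunit : IsUnit T.det := isUnit_iff_ne_zero.mpr hdet
  refine ⟨∑ r, (T⁻¹.mulVec y) r • SR9.Emat n r, ?_⟩
  rw [map_sum]
  have hstep : ∀ r, (fderiv ℂ (Phi n) x) ((T⁻¹.mulVec y) r • SR9.Emat n r)
      = fun p => (T⁻¹.mulVec y) r • SR9.slope x p r := by
    intro r
    rw [(fderiv ℂ (Phi n) x).map_smul, SR9.fderiv_Emat]
    rfl
  have : (∑ r, (fderiv ℂ (Phi n) x) ((T⁻¹.mulVec y) r • SR9.Emat n r))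
      = T.mulVec (T⁻¹.mulVec y) := by
    funext p
    rw [Finset.sum_apply]
    simp only [hstep]
    simp [Matrix.mulVec, dotProduct, hT, mul_comm]
  rw [this, Matrix.mulVec_mulVec, Matrix.mul_nonsing_inv _ hunit, Matrix.one_mulVec]
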